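/- Let G be an n×n real symmetric positive definite matrix and let D be an m×n real matrix of rank m, with m < n. Let U be an n×(n−m) real matrix whose columns form an orthonormal basis of the null space {ξ ∈ ℝⁿ : Dξ = 0} of D. Then D G D' and U' G⁻¹ U are invertible, and G D' (D G D')⁻¹ D G = G − U (U' G⁻¹ U)⁻¹ U'. -/

import Mathlib

open Matrix

private lemma colFun_mul {a b k : Type*} [Fintype b] (M : Matrix a b ℝ) (N : Matrix b k ℝ)
    (j : k) : (fun i => (M * N) i j) = M *ᵥ (fun i => N i j) := by
  funext i; simp [mul_apply, mulVec, dotProduct]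

private lemma posdef_sandwich {k n : ℕ} {G : Matrix (Fin n) (Fin n) ℝ} (hG : G.PosDef)
    (D : Matrix (Fin k) (Fin n) ℝ)
    (hDT : ∀ x : Fin k → ℝ, Dᵀ *ᵥ x = 0 → x = 0) : (D * G * Dᵀ).PosDef := by
  rw [posDef_iff_dotProduct_mulVec]
  constructor
  · rw [← conjTranspose_eq_transpose_of_trivial]
    exact isHermitian_mul_mul_conjTranspose D hG.1
  · intro x hx
    have h1 : Dᵀ *ᵥ x ≠ 0 := fun h => hx (hDT x h)
    have h2 := hG.dotProduct_mulVec_pos h1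
    have e : star x ⬝ᵥ (D * G * Dᵀ) *ᵥ x = star (Dᵀ *ᵥ x) ⬝ᵥ G *ᵥ (Dᵀ *ᵥ x) := by
      simp only [star_trivial, ← mulVec_mulVec]
      rw [dotProduct_mulVec x, mulVec_transpose]
    rw [e]; exact h2

theorem stmt_1 (n m : ℕ) (hmn : m < n)
    (G : Matrix (Fin n) (Fin n) ℝ) (hG : G.PosDef)
    (D : Matrix (Fin m) (Fin n) ℝ) (hD : D.rank = m)
    (U : Matrix (Fin n) (Fin (n - m)) ℝ)
    (hUorth : Uᵀ * U = 1)
    (hUnull : D * U = 0)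
    (hUspan : ∀ ξ : Fin n → ℝ, D *ᵥ ξ = 0 → ∃ c : Fin (n - m) → ℝ, ξ = U *ᵥ c) :
    IsUnit (D * G * Dᵀ) ∧ IsUnit (Uᵀ * G⁻¹ * U) ∧
      G * Dᵀ * (D * G * Dᵀ)⁻¹ * (D * G) = G - U * (Uᵀ * G⁻¹ * U)⁻¹ * Uᵀ := by
  have hDT : ∀ x : Fin m → ℝ, Dᵀ *ᵥ x = 0 → x = 0 := by
    have hinj : Function.Injective Dᵀ.mulVecLin := by
      rw [← LinearMap.ker_eq_bot]
      have h1 : Dᵀ.rank = m := by rw [Matrix.rank_transpose]; exact hD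
      have h2 := Dᵀ.mulVecLin.finrank_range_add_finrank_ker
      rw [show Module.finrank ℝ (LinearMap.range Dᵀ.mulVecLin) = Dᵀ.rank from rfl, h1,
        Module.finrank_fintype_fun_eq_card, Fintype.card_fin] at h2
      have : Module.finrank ℝ (LinearMap.ker Dᵀ.mulVecLin) = 0 := by omega
      exact Submodule.finrank_eq_zero.1 this
    intro x hx
    exact hinj (a₁ := x) (a₂ := 0)
      (by rw [mulVecLin_apply, mulVecLin_apply, hx, mulVec_zero])
  have hUT : ∀ c : Fin (n - m) → ℝ, U *ᵥ c = 0 → c = 0 := by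
    intro c hc
    have h : (Uᵀ * U) *ᵥ c = 0 := by rw [← mulVec_mulVec, hc, mulVec_zero]
    simpa [hUorth] using h
  have hGinv : G⁻¹.PosDef := hG.inv
  have hA : (D * G * Dᵀ).PosDef := posdef_sandwich hG D hDT
  have hB : (Uᵀ * G⁻¹ * U).PosDef := by
    have := posdef_sandwich hGinv Uᵀ (by simpa using hUT)
    simpa using this
  have hAu : IsUnit (D * G * Dᵀ) := hA.isUnit
  have hBu : IsUnit (Uᵀ * G⁻¹ * U) := hB.isUnit
  refine ⟨hAu, hBu, ?_⟩
  have hAA : (D * G * Dᵀ) * (D * G * Dᵀ)⁻¹ = 1 :=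
    mul_nonsing_inv _ ((isUnit_iff_isUnit_det _).1 hAu)
  have hBB : (Uᵀ * G⁻¹ * U) * (Uᵀ * G⁻¹ * U)⁻¹ = 1 :=
    mul_nonsing_inv _ ((isUnit_iff_isUnit_det _).1 hBu)
  have hBB' : (Uᵀ * G⁻¹ * U)⁻¹ * (Uᵀ * G⁻¹ * U) = 1 :=
    nonsing_inv_mul _ ((isUnit_iff_isUnit_det _).1 hBu)
  have hGG : G⁻¹ * G = 1 := nonsing_inv_mul _ ((isUnit_iff_isUnit_det _).1 hG.isUnit)
  set P : Matrix (Fin n) (Fin n) ℝ := G * Dᵀ * (D * G * Dᵀ)⁻¹ * D with hP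
  set Q : Matrix (Fin n) (Fin n) ℝ := U * (Uᵀ * G⁻¹ * U)⁻¹ * (Uᵀ * G⁻¹) with hQ
  set R : Matrix (Fin n) (Fin n) ℝ := 1 - P - Q with hR
  have hDP : D * P = D := by
    calc D * P = D * G * Dᵀ * ((D * G * Dᵀ)⁻¹ * D) := by
          simp only [hP, Matrix.mul_assoc]
      _ = D := by rw [← Matrix.mul_assoc, hAA, Matrix.one_mul]
  have hDQ : D * Q = 0 := by
    calc D * Q = D * U * ((Uᵀ * G⁻¹ * U)⁻¹ * (Uᵀ * G⁻¹)) := by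
          simp only [hQ, Matrix.mul_assoc]
      _ = 0 := by rw [hUnull, Matrix.zero_mul]
  have hDR : D * R = 0 := by
    rw [hR, Matrix.mul_sub, Matrix.mul_sub, hDP, hDQ, Matrix.mul_one]
    simp
  have hUUR : U * (Uᵀ * R) = R := by
    ext i j
    obtain ⟨c, hc⟩ := hUspan (fun i => R i j) (by
      rw [← colFun_mul D R j, hDR]; rfl)
    have e1 : (fun i => (U * (Uᵀ * R)) i j) = U *ᵥ (Uᵀ *ᵥ (fun i => R i j)) := by
      rw [colFun_mul, colFun_mul]
    have e2 : U *ᵥ (Uᵀ *ᵥ (fun i => R i j)) = (fun i => R i j) := by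
      rw [hc, show Uᵀ *ᵥ (U *ᵥ c) = c from by rw [mulVec_mulVec, hUorth, one_mulVec]]
    exact congrFun (e1.trans e2) i
  have hUGP : Uᵀ * (G⁻¹ * P) = 0 := by
    have h1 : G⁻¹ * P = Dᵀ * ((D * G * Dᵀ)⁻¹ * D) := by
      calc G⁻¹ * P = G⁻¹ * G * (Dᵀ * ((D * G * Dᵀ)⁻¹ * D)) := by
            simp only [hP, Matrix.mul_assoc]
        _ = _ := by rw [hGG, Matrix.one_mul]
    rw [h1, ← Matrix.mul_assoc, show Uᵀ * Dᵀ = (D * U)ᵀ from (transpose_mul D U).symm,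
      hUnull]
    simp
  have hUGQ : Uᵀ * (G⁻¹ * Q) = Uᵀ * G⁻¹ := by
    calc Uᵀ * (G⁻¹ * Q)
        = Uᵀ * G⁻¹ * U * ((Uᵀ * G⁻¹ * U)⁻¹ * (Uᵀ * G⁻¹)) := by
          simp only [hQ, Matrix.mul_assoc]
      _ = Uᵀ * G⁻¹ := by rw [← Matrix.mul_assoc, hBB, Matrix.one_mul]
  have hUGR : Uᵀ * (G⁻¹ * R) = 0 := by
    have e : Uᵀ * (G⁻¹ * R) = Uᵀ * G⁻¹ - Uᵀ * (G⁻¹ * P) - Uᵀ * (G⁻¹ * Q) := by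
      rw [hR]; simp only [Matrix.mul_sub, Matrix.mul_one]
    rw [e, hUGP, hUGQ]
    simp
  have h0 : (Uᵀ * G⁻¹ * U) * (Uᵀ * R) = 0 := by
    calc (Uᵀ * G⁻¹ * U) * (Uᵀ * R) = Uᵀ * (G⁻¹ * (U * (Uᵀ * R))) := by
          simp only [Matrix.mul_assoc]
      _ = Uᵀ * (G⁻¹ * R) := by rw [hUUR]
      _ = 0 := hUGR
  have hUTR : Uᵀ * R = 0 := by
    calc Uᵀ * R = (Uᵀ * G⁻¹ * U)⁻¹ * (Uᵀ * G⁻¹ * U) * (Uᵀ * R) := by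
          rw [hBB', Matrix.one_mul]
      _ = (Uᵀ * G⁻¹ * U)⁻¹ * ((Uᵀ * G⁻¹ * U) * (Uᵀ * R)) := by rw [Matrix.mul_assoc]
      _ = 0 := by rw [h0, Matrix.mul_zero]
  have hR0 : R = 0 := by rw [← hUUR, hUTR, Matrix.mul_zero]
  have hPQ : P = 1 - Q := by
    have h : (1 : Matrix (Fin n) (Fin n) ℝ) - P - Q = 0 := by rw [← hR, hR0]
    rw [sub_sub] at h
    exact eq_sub_of_add_eq (sub_eq_zero.mp h).symm
  have hQG : Q * G = U * (Uᵀ * G⁻¹ * U)⁻¹ * Uᵀ := by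
    calc Q * G = U * (Uᵀ * G⁻¹ * U)⁻¹ * (Uᵀ * (G⁻¹ * G)) := by
          simp only [hQ, Matrix.mul_assoc]
      _ = _ := by rw [hGG, Matrix.mul_one, Matrix.mul_assoc]
  calc G * Dᵀ * (D * G * Dᵀ)⁻¹ * (D * G) = P * G := by simp only [hP, Matrix.mul_assoc]
    _ = (1 - Q) * G := by rw [hPQ]
    _ = G - Q * G := by rw [Matrix.sub_mul, Matrix.one_mul]
    _ = G - U * (Uᵀ * G⁻¹ * U)⁻¹ * Uᵀ := by rw [hQG]
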